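/- Let f be monotone submodular on T = T₁ ⊔ … ⊔ T_n with f(∅)=0, and let S be subset-stable with respect to contract α. Then for any subset of agents G ⊆ [n], the restricted profile S|_G (keeping Sᵢ for i ∈ G and replacing Sᵢ by ∅ otherwise) is subset-stable with respect to the contract α|_G (keeping αᵢ for i ∈ G and zero otherwise). -/

import Mathlib

lemma biUnion_split {n : ℕ} {T : Type*} [Fintype T] [DecidableEq T]
    (h : Fin n → Finset T) (G : Finset (Fin n)) :
    Finset.univ.biUnion h =
      (Finset.univ.biUnion fun i' => if i' ∈ G then h i' else ∅) ∪
      (Finset.univ.biUnion fun i' => if i' ∈ G then ∅ else h i') := by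
  ext j
  simp only [Finset.mem_biUnion, Finset.mem_union, Finset.mem_univ, true_and]
  constructor
  · rintro ⟨k, hk⟩
    by_cases hkG : k ∈ G
    · exact Or.inl ⟨k, by simp [hkG, hk]⟩
    · exact Or.inr ⟨k, by simp [hkG, hk]⟩
  · rintro (⟨k, hk⟩ | ⟨k, hk⟩) <;>
    · refine ⟨k, ?_⟩
      split at hk <;> simp_all

/-- For monotone submodular `f` with `f ∅ = 0`, if `S` is
subset-stable with respect to contract `α`, then for any subset of agents `G`,
the restricted profile `S|_G` is subset-stable with respect to `α|_G`. -/
theorem stmt_14 {n : ℕ} {T : Type*} [Fintype T] [DecidableEq T]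
    (own : T → Fin n) (f : Finset T → ℝ) (c : T → ℝ)
    (hmono : ∀ A B : Finset T, A ⊆ B → f A ≤ f B)
    (hsubmod : ∀ A B : Finset T, f (A ∪ B) + f (A ∩ B) ≤ f A + f B)
    (hempty : f ∅ = 0)
    (hc : ∀ j, 0 ≤ c j)
    (α : Fin n → ℝ) (hα : ∀ i, 0 ≤ α i ∧ α i ≤ 1)
    (S : Fin n → Finset T) (hSown : ∀ i, ∀ j ∈ S i, own j = i)
    (hstable : ∀ i : Fin n, ∀ S' ⊆ S i,
      α i * f (Finset.univ.biUnion S) - ∑ j ∈ S i, c j ≥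
        α i * f (Finset.univ.biUnion (Function.update S i S')) - ∑ j ∈ S', c j)
    (G : Finset (Fin n)) :
    ∀ i : Fin n, ∀ S' ⊆ (if i ∈ G then S i else ∅),
      (if i ∈ G then α i else 0) *
          f (Finset.univ.biUnion (fun i' => if i' ∈ G then S i' else ∅)) -
          ∑ j ∈ (if i ∈ G then S i else ∅), c j ≥
        (if i ∈ G then α i else 0) *
          f (Finset.univ.biUnion
              (Function.update (fun i' => if i' ∈ G then S i' else ∅) i S')) -
          ∑ j ∈ S', c j := by
  intro i S' hS'
  by_cases hiG : i ∈ G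
  · simp only [if_pos hiG] at hS' ⊢
    set g : Fin n → Finset T := fun i' => if i' ∈ G then S i' else ∅ with hg
    set R : Finset T := Finset.univ.biUnion fun i' => if i' ∈ G then ∅ else S i' with hR
    set UG : Finset T := Finset.univ.biUnion g with hUG
    set U'G : Finset T := Finset.univ.biUnion (Function.update g i S') with hU'G
    have key := hstable i S' hS'
    -- split the full unions
    have hU : Finset.univ.biUnion S = UG ∪ R := biUnion_split S G
    have hupd : (fun i' => if i' ∈ G then Function.update S i S' i' else ∅) =
        Function.update g i S' := by
      funext k
      by_cases hk : k = i
      · subst hk; simp [hiG]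
      · simp [Function.update_of_ne hk, hg]
    have hupd2 : (fun i' => if i' ∈ G then ∅ else Function.update S i S' i') =
        (fun i' => if i' ∈ G then ∅ else S i') := by
      funext k
      by_cases hk : k = i
      · subst hk; simp [hiG]
      · simp [Function.update_of_ne hk]
    have hU' : Finset.univ.biUnion (Function.update S i S') = U'G ∪ R := by
      rw [biUnion_split (Function.update S i S') G, hupd, hupd2]
    -- U'G ⊆ UG
    have hsub : U'G ⊆ UG := by
      apply Finset.biUnion_subset.2
      intro k _
      by_cases hk : k = i
      · subst hk
        rw [Function.update_self]
        refine Finset.Subset.trans ?_ (Finset.subset_biUnion_of_mem g (Finset.mem_univ k))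
        simp [hg, hiG]; exact hS'
      · rw [Function.update_of_ne hk]
        exact Finset.subset_biUnion_of_mem g (Finset.mem_univ k)
    -- submodularity
    have hAB : UG ∪ (U'G ∪ R) = UG ∪ R := by
      rw [← Finset.union_assoc, Finset.union_eq_left.mpr hsub]
    have hsm := hsubmod UG (U'G ∪ R)
    rw [hAB] at hsm
    have hmon : f U'G ≤ f (UG ∩ (U'G ∪ R)) := by
      apply hmono
      exact Finset.subset_inter hsub Finset.subset_union_left
    have hkey2 : f (UG ∪ R) + f U'G ≤ f UG + f (U'G ∪ R) := by linarith
    rw [hU, hU'] at key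
    have hα0 := (hα i).1
    nlinarith [mul_le_mul_of_nonneg_left (by linarith : f (U'G ∪ R) - f (UG ∪ R) ≥ f U'G - f UG) hα0]
  · have hS'e : S' = ∅ := Finset.subset_empty.mp (by simpa [hiG] using hS')
    subst hS'e
    simp [hiG]
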